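/- (Theorem 3) Let 1 ≤ m ≤ n. Let A be an m×(n−1) binary matrix with guard bits a_{i,−1} = 1 and a_{i,n−1} = 0, let B be an (m−1)×n binary matrix with guard bits b_{−1,j} = 1 and b_{m−1,j} = 0, and let X = (x_{i,j}) be an m×n binary matrix. Define Δa_{i,j} = a_{i,j−1} − a_{i,j} and Δb_{i,j} = b_{i−1,j} − b_{i,j} for 0 ≤ i ≤ m−1 and 0 ≤ j ≤ n−1, and set E_e^{mn}(A,B,X) = (1/2)·Σ_{i,j} (Δa_{i,j})^2 + (1/2)·Σ_{i,j} (Δb_{i,j})^2 + Σ_{i,j} (x_{i,j} − Δa_{i,j})^2 + Σ_{i,j} x_{i,j}·(1 − Δb_{i,j}). Then E_e^{mn}(A,B,X) ≥ (m+n)/2, and E_e^{mn}(A,B,X) = (m+n)/2 if and only if A, B, and X satisfy the row domain-wall condition, the column domain-wall condition, the dual-permutation condition, and the one-hot permutation condition. -/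
import Mathlib


/-- Guard-extended row of the matrix `A` (rows of length `n-1`, guard bits
`a_{i,-1} = 1` at shifted index `0` and `a_{i,n-1} = 0` at shifted index `n`). -/
def gA (n : ℕ) (A : ℕ → ℕ → ℤ) (i j : ℕ) : ℤ :=
  if j = 0 then 1 else if j < n then A i (j - 1) else 0

/-- `Δa_{i,j} = a_{i,j-1} - a_{i,j}` computed on the guard-extended rows of `A`. -/
def dA (n : ℕ) (A : ℕ → ℕ → ℤ) (i j : ℕ) : ℤ := gA n A i j - gA n A i (j + 1)

/-- Guard-extended column of the matrix `B` (columns of length `m-1`, guard bits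
`b_{-1,j} = 1` at shifted index `0` and `b_{m-1,j} = 0` at shifted index `m`). -/
def gB (m : ℕ) (B : ℕ → ℕ → ℤ) (i j : ℕ) : ℤ :=
  if i = 0 then 1 else if i < m then B (i - 1) j else 0

/-- `Δb_{i,j} = b_{i-1,j} - b_{i,j}` computed on the guard-extended columns of `B`. -/
def dB (m : ℕ) (B : ℕ → ℕ → ℤ) (i j : ℕ) : ℤ := gB m B i j - gB m B (i + 1) j

/-- Row domain-wall condition: every guard-extended row of the `m × (n-1)` matrix `A`
is a domain-wall vector. -/
def RowDW (m n : ℕ) (A : ℕ → ℕ → ℤ) : Prop :=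
  ∀ i < m, ∃ t ≤ n - 1, ∀ j < n - 1, (j < t → A i j = 1) ∧ (t ≤ j → A i j = 0)

/-- Column domain-wall condition: every guard-extended column of the `(m-1) × n` matrix `B`
is a domain-wall vector. -/
def ColDW (m n : ℕ) (B : ℕ → ℕ → ℤ) : Prop :=
  ∀ j < n, ∃ t ≤ m - 1, ∀ i < m - 1, (i < t → B i j = 1) ∧ (t ≤ i → B i j = 0)

/-- The extended dual-matrix domain-wall QUBO energy for partial permutations:
`E_eᵐⁿ(A,B,X) = ½ ΣΣ (Δa)² + ½ ΣΣ (Δb)² + ΣΣ (x - Δa)² + ΣΣ x·(1 - Δb)`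
over `0 ≤ i ≤ m-1` and `0 ≤ j ≤ n-1`. -/
def Ee (m n : ℕ) (A B X : ℕ → ℕ → ℤ) : ℚ :=
  (1 / 2 : ℚ) * ∑ i ∈ Finset.range m, ∑ j ∈ Finset.range n, (dA n A i j : ℚ) ^ 2 +
  (1 / 2 : ℚ) * ∑ i ∈ Finset.range m, ∑ j ∈ Finset.range n, (dB m B i j : ℚ) ^ 2 +
  ∑ i ∈ Finset.range m, ∑ j ∈ Finset.range n, ((X i j : ℚ) - (dA n A i j : ℚ)) ^ 2 +
  ∑ i ∈ Finset.range m, ∑ j ∈ Finset.range n, (X i j : ℚ) * (1 - (dB m B i j : ℚ))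

/-- Dual-permutation condition: for all `i < m` and `j < n`, if `Δa_{i,j} = 1` then
`Δb_{i,j} = 1`. -/
def DualPerm (m n : ℕ) (A B : ℕ → ℕ → ℤ) : Prop :=
  ∀ i < m, ∀ j < n, dA n A i j = 1 → dB m B i j = 1

/-- One-hot permutation condition: `x_{i,j} = Δa_{i,j}` for all `i < m`, `j < n`. -/
def OneHotPerm (m n : ℕ) (A X : ℕ → ℕ → ℤ) : Prop :=
  ∀ i < m, ∀ j < n, X i j = dA n A i j

section Aux

lemma int_self_le_sq (x : ℤ) : x ≤ x ^ 2 := by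
  rcases le_or_gt x 0 with h | h <;> nlinarith

lemma int_sq_eq_self_iff (x : ℤ) : x ^ 2 = x ↔ x = 0 ∨ x = 1 := by
  constructor
  · intro h
    have h2 : x * (x - 1) = 0 := by linear_combination h
    rcases mul_eq_zero.mp h2 with h3 | h3
    · exact Or.inl h3
    · exact Or.inr (by omega)
  · rintro (rfl | rfl) <;> ring

/-- Abstract domain-wall, forward direction: binary nonincreasing ⇒ domain wall. -/
lemma dw_of_steps (n : ℕ) (g : ℕ → ℤ)
    (hbin : ∀ j, g j = 0 ∨ g j = 1)
    (hd : ∀ j < n, g j - g (j + 1) = 0 ∨ g j - g (j + 1) = 1) :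
    ∃ t ≤ n - 1, ∀ j < n - 1, (j < t → g (j + 1) = 1) ∧ (t ≤ j → g (j + 1) = 0) := by
  classical
  set S := (Finset.range (n - 1)).filter (fun j => g (j + 1) = 1) with hSdef
  have anti : ∀ a b, a ≤ b → b ≤ n → g b ≤ g a := by
    intro a b hab hbn
    induction b with
    | zero =>
      have ha : a = 0 := by omega
      simp [ha]
    | succ b ih =>
      rcases Nat.eq_or_lt_of_le hab with h | h
      · rw [h]
      · have h1 : g b ≤ g a := ih (by omega) (by omega)
        have h2 : g (b + 1) ≤ g b := by rcases hd b (by omega) with h | h <;> omega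
        omega
  have hdc : ∀ k ∈ S, ∀ k', k' ≤ k → k' ∈ S := by
    intro k hk k' hk'
    rw [hSdef, Finset.mem_filter, Finset.mem_range] at hk ⊢
    refine ⟨by omega, ?_⟩
    have h1 : g (k + 1) = 1 := hk.2
    have h2 : g (k + 1) ≤ g (k' + 1) := anti (k' + 1) (k + 1) (by omega) (by omega)
    rcases hbin (k' + 1) with h3 | h3 <;> omega
  refine ⟨S.card, ?_, ?_⟩
  · calc S.card ≤ (Finset.range (n - 1)).card := Finset.card_filter_le _ _
      _ = n - 1 := Finset.card_range _
  intro j hj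
  have mem_iff : ∀ k, k ∈ S ↔ k < S.card := by
    intro k
    constructor
    · intro hk
      have hsub : Finset.range (k + 1) ⊆ S := by
        intro x hx
        exact hdc k hk x (by simpa [Nat.lt_succ_iff] using Finset.mem_range.mp hx)
      have := Finset.card_le_card hsub
      simp only [Finset.card_range] at this
      omega
    · intro hk
      by_contra hks
      have hsub : S ⊆ Finset.range k := by
        intro x hx
        rw [Finset.mem_range]
        by_contra hxk
        exact hks (hdc x hx k (by omega))
      have := Finset.card_le_card hsub
      simp only [Finset.card_range] at this
      omega
  constructor
  · intro hjt
    have hjS : j ∈ S := (mem_iff j).mpr hjt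
    exact (Finset.mem_filter.mp hjS).2
  · intro htj
    have hjS : j ∉ S := fun h => by have := (mem_iff j).mp h; omega
    rcases hbin (j + 1) with h | h
    · exact h
    · exact absurd (Finset.mem_filter.mpr ⟨Finset.mem_range.mpr hj, h⟩) hjS

/-- Abstract domain-wall, reverse direction. -/
lemma steps_of_dw (n : ℕ) (hn : 1 ≤ n) (g : ℕ → ℤ)
    (h0 : g 0 = 1) (hend : ∀ k, n ≤ k → g k = 0)
    (t : ℕ) (ht : t ≤ n - 1)
    (hg : ∀ j < n - 1, (j < t → g (j + 1) = 1) ∧ (t ≤ j → g (j + 1) = 0)) :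
    ∀ j < n, g j - g (j + 1) = 0 ∨ g j - g (j + 1) = 1 := by
  have hval : ∀ k, k ≤ n → g k = if k ≤ t then 1 else 0 := by
    intro k hk
    rcases Nat.eq_zero_or_pos k with rfl | hk0
    · simpa [Nat.zero_le] using h0
    rcases Nat.lt_or_ge k n with hkn | hkn
    · obtain ⟨j, rfl⟩ : ∃ j, k = j + 1 := ⟨k - 1, by omega⟩
      have hj := hg j (by omega)
      by_cases hle : j + 1 ≤ t
      · rw [if_pos hle]; exact hj.1 (by omega)
      · rw [if_neg hle]; exact hj.2 (by omega)
    · rw [if_neg (by omega), hend k hkn]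
  intro j hj
  rw [hval j (by omega), hval (j + 1) (by omega)]
  split_ifs <;> omega

lemma gA_bin {m n : ℕ} {A : ℕ → ℕ → ℤ}
    (hA : ∀ i < m, ∀ j < n - 1, A i j = 0 ∨ A i j = 1)
    {i : ℕ} (hi : i < m) (j : ℕ) : gA n A i j = 0 ∨ gA n A i j = 1 := by
  unfold gA
  split_ifs with h1 h2
  · exact Or.inr rfl
  · exact hA i hi (j - 1) (by omega)
  · exact Or.inl rfl

lemma gB_bin {m n : ℕ} {B : ℕ → ℕ → ℤ}
    (hB : ∀ i < m - 1, ∀ j < n, B i j = 0 ∨ B i j = 1)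
    {j : ℕ} (hj : j < n) (i : ℕ) : gB m B i j = 0 ∨ gB m B i j = 1 := by
  unfold gB
  split_ifs with h1 h2
  · exact Or.inr rfl
  · exact hB (i - 1) (by omega) j hj
  · exact Or.inl rfl

lemma gA_end {n : ℕ} (A : ℕ → ℕ → ℤ) (i : ℕ) : ∀ k, n ≤ k → 1 ≤ n → gA n A i k = 0 := by
  intro k hk hn
  unfold gA
  rw [if_neg (by omega), if_neg (by omega)]

lemma gB_end {m : ℕ} (B : ℕ → ℕ → ℤ) (j : ℕ) : ∀ k, m ≤ k → 1 ≤ m → gB m B k j = 0 := by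
  intro k hk hm
  unfold gB
  rw [if_neg (by omega), if_neg (by omega)]

lemma sum_dA {n : ℕ} (hn : 1 ≤ n) (A : ℕ → ℕ → ℤ) (i : ℕ) :
    ∑ j ∈ Finset.range n, dA n A i j = 1 := by
  unfold dA
  rw [Finset.sum_range_sub' (fun j => gA n A i j)]
  rw [gA_end A i n le_rfl hn]
  unfold gA
  rw [if_pos rfl]
  ring

lemma sum_dB {m : ℕ} (hm : 1 ≤ m) (B : ℕ → ℕ → ℤ) (j : ℕ) :
    ∑ i ∈ Finset.range m, dB m B i j = 1 := by
  unfold dB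
  rw [Finset.sum_range_sub' (fun i => gB m B i j)]
  rw [gB_end B j m le_rfl hm]
  unfold gB
  rw [if_pos rfl]
  ring

lemma gA_shift {n : ℕ} (A : ℕ → ℕ → ℤ) (i j : ℕ) (hj : j < n - 1) :
    gA n A i (j + 1) = A i j := by
  unfold gA
  rw [if_neg (by omega), if_pos (by omega)]
  simp

lemma gB_shift {m : ℕ} (B : ℕ → ℕ → ℤ) (i j : ℕ) (hi : i < m - 1) :
    gB m B (i + 1) j = B i j := by
  unfold gB
  rw [if_neg (by omega), if_pos (by omega)]
  simp

lemma rowdw_iff (m n : ℕ) (hn : 1 ≤ n) (A : ℕ → ℕ → ℤ)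
    (hA : ∀ i < m, ∀ j < n - 1, A i j = 0 ∨ A i j = 1) :
    RowDW m n A ↔ ∀ i < m, ∀ j < n, dA n A i j = 0 ∨ dA n A i j = 1 := by
  constructor
  · intro hR i hi
    obtain ⟨t, ht, hg⟩ := hR i hi
    have hg' : ∀ j < n - 1, (j < t → gA n A i (j + 1) = 1) ∧ (t ≤ j → gA n A i (j + 1) = 0) := by
      intro j hj
      rw [gA_shift A i j hj]
      exact hg j hj
    exact steps_of_dw n hn (gA n A i) (if_pos rfl) (fun k hk => gA_end A i k hk hn) t ht hg'
  · intro h i hi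
    obtain ⟨t, ht, hg⟩ := dw_of_steps n (gA n A i) (gA_bin hA hi) (fun j hj => h i hi j hj)
    refine ⟨t, ht, fun j hj => ?_⟩
    rw [← gA_shift A i j hj]
    exact hg j hj

lemma coldw_iff (m n : ℕ) (hm : 1 ≤ m) (B : ℕ → ℕ → ℤ)
    (hB : ∀ i < m - 1, ∀ j < n, B i j = 0 ∨ B i j = 1) :
    ColDW m n B ↔ ∀ j < n, ∀ i < m, dB m B i j = 0 ∨ dB m B i j = 1 := by
  constructor
  · intro hC j hj
    obtain ⟨t, ht, hg⟩ := hC j hj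
    have hg' : ∀ i < m - 1, (i < t → gB m B (i + 1) j = 1) ∧ (t ≤ i → gB m B (i + 1) j = 0) := by
      intro i hi
      rw [gB_shift B i j hi]
      exact hg i hi
    exact steps_of_dw m hm (fun i => gB m B i j) (if_pos rfl)
      (fun k hk => gB_end B j k hk hm) t ht hg'
  · intro h j hj
    obtain ⟨t, ht, hg⟩ := dw_of_steps m (fun i => gB m B i j) (gB_bin hB hj)
      (fun i hi => h j hj i hi)
    refine ⟨t, ht, fun i hi => ?_⟩
    rw [← gB_shift B i j hi]
    exact hg i hi

/-- Generic: sum of squares of integers whose rows each sum to 1. -/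
lemma sum_sq_min (m n : ℕ) (f : ℕ → ℕ → ℤ)
    (hrow : ∀ i, ∑ j ∈ Finset.range n, f i j = 1) :
    (m : ℤ) ≤ (∑ i ∈ Finset.range m, ∑ j ∈ Finset.range n, (f i j) ^ 2) ∧
    ((∑ i ∈ Finset.range m, ∑ j ∈ Finset.range n, (f i j) ^ 2) = m ↔
      ∀ i < m, ∀ j < n, f i j = 0 ∨ f i j = 1) := by
  have hterm : ∀ (i j : ℕ), 0 ≤ (f i j) ^ 2 - f i j :=
    fun i j => sub_nonneg.mpr (int_self_le_sq _)
  have hsplit : (∑ i ∈ Finset.range m, ∑ j ∈ Finset.range n, (f i j) ^ 2)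
      = (∑ i ∈ Finset.range m, ∑ j ∈ Finset.range n, ((f i j) ^ 2 - f i j)) + m := by
    have h1 : ∀ i ∈ Finset.range m,
        ∑ j ∈ Finset.range n, ((f i j) ^ 2 - f i j)
          = (∑ j ∈ Finset.range n, (f i j) ^ 2) - 1 := by
      intro i _
      rw [Finset.sum_sub_distrib, hrow i]
    rw [Finset.sum_congr rfl h1, Finset.sum_sub_distrib]
    simp
  have hnn : (0 : ℤ) ≤ ∑ i ∈ Finset.range m, ∑ j ∈ Finset.range n, ((f i j) ^ 2 - f i j) :=
    Finset.sum_nonneg fun i _ => Finset.sum_nonneg fun j _ => hterm i j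
  have hzero : (∑ i ∈ Finset.range m, ∑ j ∈ Finset.range n, ((f i j) ^ 2 - f i j)) = 0
      ↔ ∀ i < m, ∀ j < n, f i j = 0 ∨ f i j = 1 := by
    rw [Finset.sum_eq_zero_iff_of_nonneg
      (fun i _ => Finset.sum_nonneg fun j _ => hterm i j)]
    constructor
    · intro h i hi j hj
      have h2 := (Finset.sum_eq_zero_iff_of_nonneg (fun j _ => hterm i j)).mp
        (h i (Finset.mem_range.mpr hi)) j (Finset.mem_range.mpr hj)
      exact (int_sq_eq_self_iff _).mp (by omega)
    · intro h i hi
      rw [Finset.sum_eq_zero_iff_of_nonneg (fun j _ => hterm i j)]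
      intro j hj
      have := (int_sq_eq_self_iff (f i j)).mpr
        (h i (Finset.mem_range.mp hi) j (Finset.mem_range.mp hj))
      omega
  constructor
  · omega
  · rw [hsplit]
    rw [show ((∑ i ∈ Finset.range m, ∑ j ∈ Finset.range n, ((f i j) ^ 2 - f i j)) + (m : ℤ)
        = m ↔ (∑ i ∈ Finset.range m, ∑ j ∈ Finset.range n, ((f i j) ^ 2 - f i j)) = 0) from
      by omega]
    exact hzero

end Aux


/-- Theorem 3: `E_eᵐⁿ(A,B,X) ≥ (m+n)/2`, with equality iff `A`, `B`, and `X` satisfy the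
row domain-wall, column domain-wall, dual-permutation, and one-hot permutation
conditions. -/
theorem Ee_min_iff_conditions (m n : ℕ) (hm : 1 ≤ m) (hmn : m ≤ n)
    (A B X : ℕ → ℕ → ℤ)
    (hA : ∀ i < m, ∀ j < n - 1, A i j = 0 ∨ A i j = 1)
    (hB : ∀ i < m - 1, ∀ j < n, B i j = 0 ∨ B i j = 1)
    (hX : ∀ i < m, ∀ j < n, X i j = 0 ∨ X i j = 1) :
    ((m : ℚ) + n) / 2 ≤ Ee m n A B X ∧
    (Ee m n A B X = ((m : ℚ) + n) / 2 ↔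
      RowDW m n A ∧ ColDW m n B ∧ DualPerm m n A B ∧ OneHotPerm m n A X) := by
  classical
  have hn : 1 ≤ n := hm.trans hmn
  -- integer sums
  set s1 : ℤ := ∑ i ∈ Finset.range m, ∑ j ∈ Finset.range n, (dA n A i j) ^ 2 with hs1
  set s2 : ℤ := ∑ i ∈ Finset.range m, ∑ j ∈ Finset.range n, (dB m B i j) ^ 2 with hs2
  set s3 : ℤ := ∑ i ∈ Finset.range m, ∑ j ∈ Finset.range n, (X i j - dA n A i j) ^ 2 with hs3
  set s4 : ℤ := ∑ i ∈ Finset.range m, ∑ j ∈ Finset.range n, (X i j * (1 - dB m B i j)) with hs4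
  have hEe : Ee m n A B X = ((s1 + s2 + 2 * s3 + 2 * s4 : ℤ) : ℚ) / 2 := by
    rw [hs1, hs2, hs3, hs4]
    unfold Ee
    push_cast
    ring
  -- s1
  have key1 := sum_sq_min m n (fun i j => dA n A i j) (fun i => sum_dA hn A i)
  rw [← hs1] at key1
  -- s2 (swap the summation order)
  have hswap : s2 = ∑ j ∈ Finset.range n, ∑ i ∈ Finset.range m, (dB m B i j) ^ 2 := by
    rw [hs2]; exact Finset.sum_comm
  have key2 := sum_sq_min n m (fun j i => dB m B i j) (fun j => sum_dB hm B j)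
  rw [← hswap] at key2
  -- s3
  have key3 : (0 : ℤ) ≤ s3 ∧ (s3 = 0 ↔ OneHotPerm m n A X) := by
    have hterm : ∀ (i j : ℕ), 0 ≤ (X i j - dA n A i j) ^ 2 := fun i j => sq_nonneg _
    constructor
    · exact Finset.sum_nonneg fun i _ => Finset.sum_nonneg fun j _ => hterm i j
    rw [hs3, Finset.sum_eq_zero_iff_of_nonneg
      (fun i _ => Finset.sum_nonneg fun j _ => hterm i j)]
    constructor
    · intro h i hi j hj
      have h2 := (Finset.sum_eq_zero_iff_of_nonneg (fun j _ => hterm i j)).mp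
        (h i (Finset.mem_range.mpr hi)) j (Finset.mem_range.mpr hj)
      have := pow_eq_zero_iff (n := 2) (by norm_num) |>.mp h2
      linarith [this]
    · intro h i hi
      rw [Finset.sum_eq_zero_iff_of_nonneg (fun j _ => hterm i j)]
      intro j hj
      have := h i (Finset.mem_range.mp hi) j (Finset.mem_range.mp hj)
      rw [this]; ring
  -- s4
  have hterm4 : ∀ i < m, ∀ j < n, 0 ≤ X i j * (1 - dB m B i j) := by
    intro i hi j hj
    have hx := hX i hi j hj
    have hb1 := gB_bin hB hj i
    have hb2 := gB_bin hB hj (i + 1)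
    have hdb : dB m B i j ≤ 1 := by unfold dB; omega
    rcases hx with hx | hx <;> rw [hx] <;> nlinarith
  have key4 : (0 : ℤ) ≤ s4 ∧ (s4 = 0 ↔ ∀ i < m, ∀ j < n, X i j = 0 ∨ dB m B i j = 1) := by
    constructor
    · exact Finset.sum_nonneg fun i hi => Finset.sum_nonneg fun j hj =>
        hterm4 i (Finset.mem_range.mp hi) j (Finset.mem_range.mp hj)
    rw [hs4, Finset.sum_eq_zero_iff_of_nonneg
      (fun i hi => Finset.sum_nonneg fun j hj =>
        hterm4 i (Finset.mem_range.mp hi) j (Finset.mem_range.mp hj))]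
    constructor
    · intro h i hi j hj
      have h2 := (Finset.sum_eq_zero_iff_of_nonneg (fun j hj =>
        hterm4 i hi j (Finset.mem_range.mp hj))).mp
        (h i (Finset.mem_range.mpr hi)) j (Finset.mem_range.mpr hj)
      rcases mul_eq_zero.mp h2 with h3 | h3
      · exact Or.inl h3
      · exact Or.inr (by omega)
    · intro h i hi
      rw [Finset.sum_eq_zero_iff_of_nonneg (fun j hj =>
        hterm4 i (Finset.mem_range.mp hi) j (Finset.mem_range.mp hj))]
      intro j hj
      rcases h i (Finset.mem_range.mp hi) j (Finset.mem_range.mp hj) with h3 | h3 <;>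
        rw [h3] <;> ring
  obtain ⟨k1le, k1eq⟩ := key1
  obtain ⟨k2le, k2eq⟩ := key2
  obtain ⟨k3le, k3eq⟩ := key3
  obtain ⟨k4le, k4eq⟩ := key4
  -- conditions equivalence
  have hconds : (s1 = m ∧ s2 = n ∧ s3 = 0 ∧ s4 = 0) ↔
      (RowDW m n A ∧ ColDW m n B ∧ DualPerm m n A B ∧ OneHotPerm m n A X) := by
    rw [k1eq, k2eq, k3eq, k4eq, rowdw_iff m n hn A hA, coldw_iff m n hm B hB]
    constructor
    · rintro ⟨h1, h2, h3, h4⟩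
      refine ⟨h1, h2, ?_, h3⟩
      intro i hi j hj hdA
      have hx : X i j = dA n A i j := h3 i hi j hj
      rcases h4 i hi j hj with h5 | h5
      · rw [hx, hdA] at h5; omega
      · exact h5
    · rintro ⟨h1, h2, h3, h4⟩
      refine ⟨h1, h2, h4, ?_⟩
      intro i hi j hj
      rcases hX i hi j hj with h5 | h5
      · exact Or.inl h5
      · right
        apply h3 i hi j hj
        have := h4 i hi j hj
        omega
  constructor
  · rw [hEe]
    have hT : ((m : ℤ) + n) ≤ s1 + s2 + 2 * s3 + 2 * s4 := by linarith
    have hT' : ((m : ℚ) + n) ≤ ((s1 + s2 + 2 * s3 + 2 * s4 : ℤ) : ℚ) := by exact_mod_cast hT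
    linarith
  · rw [hEe, ← hconds]
    constructor
    · intro h
      have hT : ((s1 + s2 + 2 * s3 + 2 * s4 : ℤ) : ℚ) = (m : ℚ) + n := by linarith
      have hT' : s1 + s2 + 2 * s3 + 2 * s4 = (m : ℤ) + n := by exact_mod_cast hT
      refine ⟨by linarith, by linarith, by linarith, by linarith⟩
    · rintro ⟨h1, h2, h3, h4⟩
      rw [h1, h2, h3, h4]
      push_cast
      ring
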